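/- [Uniform bound on subgradient norms along the inexact proximal trajectory] In the setting of the inexact proximal method with the step-size rule a_{i+1} = (1/(2‖F'(x_i)‖))^{(p−1)/p}·(p!/((p+1)L_p))^{1/p} (where F'(x_i) ∈ ∂F(x_i) are the subgradients produced by the method, assumed nonzero, and p ≥ 2, L_p > 0), for every k ≥ 1: ‖F'(x_k)‖ ≤ max{ ((p+1)L_p·2^{p−1}/p!)·(‖x_0 − x*‖ + Σ_{i=1}^k δ_i)^p , ‖F'(x_0)‖ }. -/

import Mathlib

open scoped RealInnerProductSpace

/-- `g` is a subgradient of `φ` at `z`, relative to the set `s`. -/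
def IsSubgradOn {E : Type*} [NormedAddCommGroup E] [InnerProductSpace ℝ E]
    (s : Set E) (φ : E → ℝ) (g z : E) : Prop :=
  ∀ y ∈ s, φ z + ⟪g, y - z⟫ ≤ φ y

set_option maxHeartbeats 1600000 in
/-- uniform bound on the subgradient norms along the trajectory of the
inexact proximal method with the step-size rule
`a_{i+1} = (1/(2‖F'(x_i)‖))^{(p−1)/p} (p!/((p+1)L_p))^{1/p}`:
`‖F'(x_k)‖ ≤ max{((p+1)L_p 2^{p−1}/p!)(‖x_0 − x*‖ + Σ_{i=1}^k δ_i)^p, ‖F'(x_0)‖}`. -/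
theorem inexact_prox_subgradient_norm_bound
    {E : Type*} [NormedAddCommGroup E] [InnerProductSpace ℝ E] [FiniteDimensional ℝ E]
    (p : ℕ) (hp : 2 ≤ p) (Lp : ℝ) (hLp : 0 < Lp)
    (F : E → ℝ) (domF : Set E) (hFconv : ConvexOn ℝ domF F)
    (hcl : IsClosed domF) (hlsc : LowerSemicontinuousOn F domF)
    (xstar : E) (hxstar : xstar ∈ domF) (hmin : ∀ y ∈ domF, F xstar ≤ F y)
    (Fstar : ℝ) (hFstar : Fstar = F xstar)
    (x g : ℕ → E) (a δ : ℕ → ℝ)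
    (hx : ∀ i, x i ∈ domF)
    (hδ : ∀ i, 1 ≤ i → 0 ≤ δ i)
    (hsub : ∀ i, 1 ≤ i → ∀ y ∈ domF,
      a i * F (x i) + ‖x i - x (i - 1)‖ ^ 2 / 2 + ⟪g i, y - x i⟫ ≤
        a i * F y + ‖y - x (i - 1)‖ ^ 2 / 2)
    (hg : ∀ i, 1 ≤ i → ‖g i‖ ≤ δ i)
    (Fp : ℕ → E) (hFp : ∀ i, 1 ≤ i → Fp i = (a i)⁻¹ • (g i - (x i - x (i - 1))))
    (hFp0 : IsSubgradOn domF F (Fp 0) (x 0))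
    (hFpne : ∀ i, Fp i ≠ 0)
    (harule : ∀ i : ℕ, a (i + 1) =
      (1 / (2 * ‖Fp i‖)) ^ (((p : ℝ) - 1) / p)
        * ((Nat.factorial p : ℝ) / (((p : ℝ) + 1) * Lp)) ^ ((1 : ℝ) / p)) :
    ∀ k : ℕ, 1 ≤ k →
      ‖Fp k‖ ≤ max
        (((p : ℝ) + 1) * Lp * 2 ^ (p - 1) / (Nat.factorial p : ℝ)
          * (‖x 0 - xstar‖ + ∑ i ∈ Finset.Icc 1 k, δ i) ^ p)
        ‖Fp 0‖ := by
  -- basic positivity facts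
  have hp1 : 1 ≤ p := le_trans one_le_two hp
  have hq0 : (0:ℝ) < (p:ℝ) := by exact_mod_cast Nat.lt_of_lt_of_le Nat.zero_lt_two hp
  have hqne : (p:ℝ) ≠ 0 := ne_of_gt hq0
  have hfac : (0:ℝ) < (Nat.factorial p : ℝ) := by exact_mod_cast p.factorial_pos
  have hq1 : (0:ℝ) < (p:ℝ) + 1 := by linarith
  set D : ℝ := ((Nat.factorial p : ℝ) / (((p:ℝ) + 1) * Lp)) ^ ((1:ℝ)/(p:ℝ)) with hDdef
  have hDpos : 0 < D := Real.rpow_pos_of_pos (by positivity) _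
  set e : ℝ := ((p:ℝ) - 1) / (p:ℝ) with hedef
  have hepos : 0 ≤ e := by
    have : (1:ℝ) ≤ (p:ℝ) := by exact_mod_cast hp1
    exact div_nonneg (by linarith) (le_of_lt hq0)
  have hNpos : ∀ m, 0 < ‖Fp m‖ := fun m => norm_pos_iff.mpr (hFpne m)
  have hapos : ∀ m : ℕ, 0 < a (m+1) := by
    intro m
    rw [harule m]
    have := hNpos m
    positivity
  -- key1 : the subgradient inequality for F at x (m+1)
  have key1 : ∀ m : ℕ, ⟪g (m+1) - (x (m+1) - x m), xstar - x (m+1)⟫ ≤ 0 := by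
    intro m
    set s : E := xstar - x (m+1) with hs
    set S : ℝ := ‖s‖^2 with hSdef
    have hS : 0 ≤ S := by positivity
    have main : ∀ t : ℝ, 0 < t → t ≤ 1 →
        ⟪g (m+1) - (x (m+1) - x m), s⟫ ≤ t / 2 * S := by
      intro t ht0 ht1
      have hpt : (1-t) • x (m+1) + t • xstar = x (m+1) + t • s := by
        rw [hs]; module
      have hy : x (m+1) + t • s ∈ domF := by
        rw [← hpt]
        exact hFconv.1 (hx (m+1)) hxstar (show (0:ℝ) ≤ 1 - t by linarith)
          (le_of_lt ht0) (show (1-t) + t = 1 by ring)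
      have hFy : F (x (m+1) + t • s) ≤ (1-t) * F (x (m+1)) + t * F xstar := by
        rw [← hpt]
        exact hFconv.2 (hx (m+1)) hxstar (show (0:ℝ) ≤ 1 - t by linarith)
          (le_of_lt ht0) (show (1-t) + t = 1 by ring)
      have hsub' := hsub (m+1) (Nat.le_add_left 1 m) (x (m+1) + t • s) hy
      simp only [Nat.add_sub_cancel] at hsub'
      rw [show x (m+1) + t • s - x (m+1) = t • s from by abel] at hsub'
      rw [real_inner_smul_right] at hsub'
      have hnorm : ‖x (m+1) + t • s - x m‖^2
          = ‖x (m+1) - x m‖^2 + 2 * (t * ⟪x (m+1) - x m, s⟫) + t^2 * S := by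
        rw [show x (m+1) + t • s - x m = (x (m+1) - x m) + t • s from by abel,
          norm_add_sq_real, real_inner_smul_right, norm_smul, Real.norm_eq_abs,
          mul_pow, sq_abs, hSdef]
      rw [hnorm] at hsub'
      have hmin2 : F xstar ≤ F (x (m+1)) := hmin (x (m+1)) (hx (m+1))
      have h8 : a (m+1) * F (x (m+1) + t • s)
          ≤ a (m+1) * F (x (m+1)) + a (m+1) * (t * (F xstar - F (x (m+1)))) := by
        calc a (m+1) * F (x (m+1) + t • s)
            ≤ a (m+1) * ((1-t) * F (x (m+1)) + t * F xstar) :=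
              mul_le_mul_of_nonneg_left hFy (le_of_lt (hapos m))
          _ = a (m+1) * F (x (m+1)) + a (m+1) * (t * (F xstar - F (x (m+1)))) := by
              ring
      have h9a : t * (F xstar - F (x (m+1))) ≤ 0 :=
        mul_nonpos_iff.mpr (Or.inl ⟨le_of_lt ht0, by linarith⟩)
      have h9 : a (m+1) * (t * (F xstar - F (x (m+1)))) ≤ 0 :=
        mul_nonpos_iff.mpr (Or.inl ⟨le_of_lt (hapos m), h9a⟩)
      have h10 : t * ⟪g (m+1), s⟫ - t * ⟪x (m+1) - x m, s⟫ ≤ t^2 * S / 2 := by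
        linarith [hsub', h8, h9]
      rw [inner_sub_left]
      rw [← mul_le_mul_iff_right₀ ht0]
      nlinarith [h10]
    by_contra hc
    push_neg at hc
    set c : ℝ := ⟪g (m+1) - (x (m+1) - x m), s⟫ with hcdef
    set t : ℝ := min 1 (c / (S + 1)) with htdef
    have ht0 : 0 < t := lt_min one_pos (div_pos hc (by positivity))
    have ht1 : t ≤ 1 := min_le_left _ _
    have htc : t * (S + 1) ≤ c := by
      have := min_le_right 1 (c / (S+1))
      calc t * (S+1) ≤ (c / (S+1)) * (S+1) := by
            apply mul_le_mul_of_nonneg_right this (by positivity)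
        _ = c := by field_simp
    have := main t ht0 ht1
    nlinarith
  -- key2 : the one-step estimates
  have key2 : ∀ m : ℕ, ‖x (m+1) - xstar‖ ≤ ‖x m - xstar‖ + δ (m+1)
      ∧ a (m+1) * ‖Fp (m+1)‖ ≤ ‖x m - xstar‖ + δ (m+1) := by
    intro m
    set h : E := g (m+1) - (x (m+1) - x m) with hhdef
    set v : E := (x m - xstar) + g (m+1) with hvdef
    have hveq : (x (m+1) - xstar) + h = v := by rw [hhdef, hvdef]; abel
    have hip : 0 ≤ ⟪x (m+1) - xstar, h⟫ := by
      have := key1 m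
      have h2 : ⟪x (m+1) - xstar, h⟫ = - ⟪h, xstar - x (m+1)⟫ := by
        rw [real_inner_comm, show xstar - x (m+1) = -(x (m+1) - xstar) from by abel,
          inner_neg_right]
        ring
      rw [h2]; linarith
    have hvsq : ‖v‖^2 = ‖x (m+1) - xstar‖^2 + 2 * ⟪x (m+1) - xstar, h⟫ + ‖h‖^2 := by
      rw [← hveq, norm_add_sq_real]
    have hvle : ‖v‖ ≤ ‖x m - xstar‖ + δ (m+1) := by
      calc ‖v‖ ≤ ‖x m - xstar‖ + ‖g (m+1)‖ := norm_add_le _ _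
        _ ≤ ‖x m - xstar‖ + δ (m+1) := by
            linarith [hg (m+1) (Nat.le_add_left 1 m)]
    have hrhs : (0:ℝ) ≤ ‖x m - xstar‖ + δ (m+1) := le_trans (norm_nonneg _) hvle
    have hFpnorm : a (m+1) * ‖Fp (m+1)‖ = ‖h‖ := by
      rw [hFp (m+1) (Nat.le_add_left 1 m)]
      simp only [Nat.add_sub_cancel]
      rw [norm_smul, Real.norm_eq_abs, abs_inv, abs_of_pos (hapos m), hhdef]
      field_simp
      exact mul_div_cancel_left₀ _ (ne_of_gt (hapos m))
    constructor
    · apply le_of_pow_le_pow_left₀ two_ne_zero hrhs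
      calc ‖x (m+1) - xstar‖^2 ≤ ‖v‖^2 := by nlinarith [sq_nonneg ‖h‖]
        _ ≤ (‖x m - xstar‖ + δ (m+1))^2 := by
            apply pow_le_pow_left₀ (norm_nonneg _) hvle
    · rw [hFpnorm]
      apply le_of_pow_le_pow_left₀ two_ne_zero hrhs
      calc ‖h‖^2 ≤ ‖v‖^2 := by nlinarith [sq_nonneg ‖x (m+1) - xstar‖]
        _ ≤ (‖x m - xstar‖ + δ (m+1))^2 := by
            apply pow_le_pow_left₀ (norm_nonneg _) hvle
  -- the accumulated radius
  set R : ℕ → ℝ := fun n => ‖x 0 - xstar‖ + ∑ i ∈ Finset.Icc 1 n, δ i with hRdef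
  have hR0 : R 0 = ‖x 0 - xstar‖ := by
    simp [hRdef, Finset.Icc_eq_empty (by omega : ¬ (1:ℕ) ≤ 0)]
  have hRsucc : ∀ n, R (n+1) = R n + δ (n+1) := by
    intro n
    simp only [hRdef]
    rw [Finset.sum_Icc_succ_top (Nat.le_add_left 1 n)]
    ring
  have hRnonneg : ∀ n, 0 ≤ R n := by
    intro n
    apply add_nonneg (norm_nonneg _)
    exact Finset.sum_nonneg fun i hi => hδ i (Finset.mem_Icc.mp hi).1
  have hRmono : ∀ n, R n ≤ R (n+1) := by
    intro n
    rw [hRsucc n]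
    linarith [hδ (n+1) (Nat.le_add_left 1 n)]
  have hxR : ∀ n, ‖x n - xstar‖ ≤ R n := by
    intro n
    induction n with
    | zero => rw [hR0]
    | succ m ih =>
      rw [hRsucc m]
      linarith [(key2 m).1]
  have haR : ∀ m, a (m+1) * ‖Fp (m+1)‖ ≤ R (m+1) := by
    intro m
    rw [hRsucc m]
    linarith [(key2 m).2, hxR m]
  set C : ℝ := ((p:ℝ) + 1) * Lp * 2 ^ (p - 1) / (Nat.factorial p : ℝ) with hCdef
  have hCpos : 0 < C := by positivity
  -- core step inequality
  have core : ∀ m : ℕ, ‖Fp (m+1)‖ ≤ max (C * R (m+1) ^ p) ‖Fp m‖ := by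
    intro m
    rcases le_or_gt ‖Fp (m+1)‖ ‖Fp m‖ with hle | hlt
    · exact le_trans hle (le_max_right _ _)
    set M : ℝ := ‖Fp (m+1)‖ with hMdef
    set N : ℝ := ‖Fp m‖ with hNdef
    have hMpos : 0 < M := hNpos (m+1)
    have hNpos' : 0 < N := hNpos m
    set Rk : ℝ := R (m+1) with hRkdef
    have hRkpos : 0 ≤ Rk := hRnonneg (m+1)
    have h1 : (1/(2*M)) ^ e ≤ (1/(2*N)) ^ e := by
      apply Real.rpow_le_rpow (by positivity) _ hepos
      apply one_div_le_one_div_of_le (by positivity)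
      linarith
    have h2 : (1/(2*M)) ^ e * D * M ≤ Rk := by
      calc (1/(2*M)) ^ e * D * M ≤ (1/(2*N)) ^ e * D * M := by
            apply mul_le_mul_of_nonneg_right _ hMpos.le
            exact mul_le_mul_of_nonneg_right h1 hDpos.le
        _ = a (m+1) * M := by rw [harule m, hNdef]
        _ ≤ Rk := haR m
    have h2e : (0:ℝ) < (2:ℝ) ^ e := Real.rpow_pos_of_pos two_pos _
    have hMe : (0:ℝ) < M ^ e := Real.rpow_pos_of_pos hMpos _
    have h1e : (1:ℝ) - e = 1/(p:ℝ) := by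
      rw [hedef]; field_simp; ring
    have h3 : (1/(2*M)) ^ e * M = M ^ ((1:ℝ)/(p:ℝ)) / 2 ^ e := by
      rw [← h1e, Real.rpow_sub hMpos, Real.rpow_one, one_div,
        Real.inv_rpow (by positivity), Real.mul_rpow (by norm_num) hMpos.le]
      rw [mul_inv, div_div, mul_comm (M ^ e) (2 ^ e)]
      ring
    have h4 : M ^ ((1:ℝ)/(p:ℝ)) ≤ Rk * 2 ^ e / D := by
      rw [le_div_iff₀ hDpos]
      calc M ^ ((1:ℝ)/(p:ℝ)) * D = (M ^ ((1:ℝ)/(p:ℝ)) / 2 ^ e * D) * 2 ^ e := by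
            field_simp
        _ = ((1/(2*M)) ^ e * D * M) * 2 ^ e := by rw [← h3]; ring
        _ ≤ Rk * 2 ^ e := mul_le_mul_of_nonneg_right h2 h2e.le
    have h5 : M ≤ (Rk * 2 ^ e / D) ^ ((p:ℝ)) := by
      have := Real.rpow_le_rpow (Real.rpow_nonneg hMpos.le _) h4 hq0.le
      rwa [← Real.rpow_mul hMpos.le, one_div_mul_cancel hqne, Real.rpow_one] at this
    have h6 : (Rk * 2 ^ e / D) ^ ((p:ℝ)) = Rk ^ p * 2 ^ (p-1) * (((p:ℝ)+1) * Lp / (Nat.factorial p : ℝ)) := by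
      rw [Real.div_rpow (by positivity) hDpos.le,
        Real.mul_rpow hRkpos (by positivity), ← Real.rpow_natCast Rk p,
        ← Real.rpow_mul (by norm_num : (0:ℝ) ≤ 2)]
      have heq : e * (p:ℝ) = (p:ℝ) - 1 := by rw [hedef]; field_simp
      have hDq : D ^ ((p:ℝ)) = (Nat.factorial p : ℝ) / (((p:ℝ)+1) * Lp) := by
        rw [hDdef, ← Real.rpow_mul (by positivity), one_div_mul_cancel hqne, Real.rpow_one]
      rw [heq, hDq]
      have hcast : ((p:ℝ) - 1) = ((p - 1 : ℕ) : ℝ) := by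
        rw [Nat.cast_sub hp1]; norm_num
      rw [hcast, Real.rpow_natCast, Real.rpow_natCast]
      field_simp
    have hfinal : M ≤ C * Rk ^ p := by
      rw [hCdef]
      calc M ≤ Rk ^ p * 2 ^ (p-1) * (((p:ℝ)+1) * Lp / (Nat.factorial p : ℝ)) := by
            rw [← h6]; exact h5
        _ = ((p:ℝ) + 1) * Lp * 2 ^ (p - 1) / (Nat.factorial p : ℝ) * Rk ^ p := by
            ring
    exact le_trans hfinal (le_max_left _ _)
  -- main induction
  have hCRmono : ∀ n, C * R n ^ p ≤ C * R (n+1) ^ p := by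
    intro n
    apply mul_le_mul_of_nonneg_left _ hCpos.le
    exact pow_le_pow_left₀ (hRnonneg n) (hRmono n) p
  intro k hk
  show ‖Fp k‖ ≤ max (C * R k ^ p) ‖Fp 0‖
  induction k, hk using Nat.le_induction with
  | base => exact core 0
  | succ n hn ih =>
    refine le_trans (core n) (max_le (le_max_left _ _) (le_trans ih (max_le ?_ (le_max_right _ _))))
    exact le_trans (hCRmono n) (le_max_left _ _)
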